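/- Let R be a division ring and x_1, x_2 ∈ R with x_1 ≠ x_2. Define x_{1,2} = (x_2 - x_1)x_2(x_2 - x_1)^{-1} and x_{2,1} = (x_1 - x_2)x_1(x_1 - x_2)^{-1}. Then x_{1,2} + x_1 = x_{2,1} + x_2 and x_{1,2}·x_1 = x_{2,1}·x_2. -/
import Mathlib


/-- For distinct `x₁, x₂` in a division ring, with
`x_{1,2} = (x₂-x₁)x₂(x₂-x₁)⁻¹` and `x_{2,1} = (x₁-x₂)x₁(x₁-x₂)⁻¹`, one has
`x_{1,2} + x₁ = x_{2,1} + x₂` and `x_{1,2}·x₁ = x_{2,1}·x₂`. -/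
theorem stmt15 (R : Type) [DivisionRing R] (x₁ x₂ : R) (h : x₁ ≠ x₂) :
    (x₂ - x₁) * x₂ * (x₂ - x₁)⁻¹ + x₁ = (x₁ - x₂) * x₁ * (x₁ - x₂)⁻¹ + x₂ ∧
    ((x₂ - x₁) * x₂ * (x₂ - x₁)⁻¹) * x₁ = ((x₁ - x₂) * x₁ * (x₁ - x₂)⁻¹) * x₂ := by
  have hd : x₂ - x₁ ≠ 0 := sub_ne_zero.mpr h.symm
  have hneg : (x₁ - x₂) * x₁ * (x₁ - x₂)⁻¹ = (x₂ - x₁) * x₁ * (x₂ - x₁)⁻¹ := by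
    rw [← neg_sub x₂ x₁, inv_neg, neg_mul, mul_neg, neg_mul, neg_neg]
  rw [hneg]
  constructor
  · apply mul_right_cancel₀ hd
    rw [add_mul, add_mul, mul_assoc ((x₂ - x₁) * x₂), inv_mul_cancel₀ hd, mul_one,
      mul_assoc ((x₂ - x₁) * x₁), inv_mul_cancel₀ hd, mul_one]
    noncomm_ring
  · have key : x₂ * (x₂ - x₁)⁻¹ * x₁ = x₁ * (x₂ - x₁)⁻¹ * x₂ := by
      have h3 : x₂ * (x₂ - x₁)⁻¹ * x₁ - x₁ * (x₂ - x₁)⁻¹ * x₁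
          = x₁ * (x₂ - x₁)⁻¹ * x₂ - x₁ * (x₂ - x₁)⁻¹ * x₁ := by
        rw [← sub_mul, ← sub_mul, mul_inv_cancel₀ hd, one_mul,
          mul_assoc, mul_assoc, ← mul_sub, ← mul_sub, inv_mul_cancel₀ hd, mul_one]
      exact sub_left_inj.mp h3
    rw [mul_assoc, mul_assoc, mul_assoc, mul_assoc, ← mul_assoc x₂, ← mul_assoc x₁, key]
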